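/- Consequences of the tradeoff lemma: suppose for all real x and all tests the Neyman–Pearson inequality holds, and define η(a) = liminf −(1/n) log α_n(a), ζ(a) = liminf −(1/n) log β_n(a). Then for any a < b: (i) if ζ(a) < ζ(b) then ζ(a) ≥ a + η(b); (ii) if η(a) > η(b) then η(b) ≥ −b + ζ(a). -/

import Mathlib

open Filter

/-- The liminf exponential rate `liminf -(1/n) log p n`, with the convention
that the exponent is `+∞` when `p n = 0` (i.e. `log 0 = -∞`). -/
noncomputable def liminfExpRate (p : ℕ → ℝ) : EReal :=
  Filter.liminf (fun n => if p n = 0 then (⊤ : EReal)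
    else ((-(1 / (n : ℝ)) * Real.log (p n) : ℝ) : EReal)) Filter.atTop

/-- The limsup exponential rate `limsup -(1/n) log p n`, with the convention
that the exponent is `+∞` when `p n = 0`. -/
noncomputable def limsupExpRate (p : ℕ → ℝ) : EReal :=
  Filter.limsup (fun n => if p n = 0 then (⊤ : EReal)
    else ((-(1 / (n : ℝ)) * Real.log (p n) : ℝ) : EReal)) Filter.atTop

/-- Consequences of the tradeoff lemma for the family of likelihood tests:
for `a < b`, (i) if `ζ(a) < ζ(b)` then `ζ(a) ≥ a + η(b)`;
(ii) if `η(a) > η(b)` then `η(b) ≥ -b + ζ(a)`. -/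
private lemma rate_scale (u : ℕ → ℝ) (a : ℝ) :
    (a : EReal) + liminfExpRate u ≤
      liminfExpRate (fun n => Real.exp (-((n : ℝ) * a)) * u n) := by
  unfold liminfExpRate
  set f : ℕ → EReal := fun n => if u n = 0 then (⊤ : EReal)
    else ((-(1 / (n : ℝ)) * Real.log (u n) : ℝ) : EReal) with hf
  rw [Filter.le_liminf_iff]
  intro y hy
  have hy' : y - (a : EReal) < liminf f atTop := by
    rw [EReal.sub_lt_iff (Or.inl (EReal.coe_ne_bot a)) (Or.inl (EReal.coe_ne_top a))]
    rwa [add_comm] at hy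
  filter_upwards [Filter.eventually_lt_of_lt_liminf hy',
    eventually_ge_atTop (1 : ℕ)] with n hn hn1
  have hgoal : y < (a : EReal) + f n := by
    rw [EReal.sub_lt_iff (Or.inl (EReal.coe_ne_bot a)) (Or.inl (EReal.coe_ne_top a))] at hn
    rwa [add_comm] at hn
  have hn0 : (n : ℝ) ≠ 0 := by positivity
  by_cases hu : u n = 0
  · have : f n = ⊤ := by simp [hf, hu]
    simp only [mul_eq_zero, hu, or_true, if_pos]
    rw [this, EReal.coe_add_top] at hgoal
    exact hgoal
  · have hm : Real.exp (-((n : ℝ) * a)) * u n ≠ 0 :=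
      mul_ne_zero (Real.exp_ne_zero _) hu
    rw [if_neg hm]
    have heq : ((-(1 / (n : ℝ)) * Real.log (Real.exp (-((n : ℝ) * a)) * u n) : ℝ) : EReal)
        = (a : EReal) + f n := by
      rw [hf]
      simp only [if_neg hu]
      rw [Real.log_mul (Real.exp_ne_zero _) hu, Real.log_exp, ← EReal.coe_add]
      congr 1
      field_simp
      ring
    rw [heq]
    exact hgoal

private lemma rate_min_le (p u v : ℕ → ℝ) (hp : ∀ n, 0 ≤ p n)
    (hle : ∀ n, p n ≤ u n + v n) :
    min (liminfExpRate u) (liminfExpRate v) ≤ liminfExpRate p := by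
  unfold liminfExpRate
  set fu : ℕ → EReal := fun n => if u n = 0 then (⊤ : EReal)
    else ((-(1 / (n : ℝ)) * Real.log (u n) : ℝ) : EReal) with hfu
  set fv : ℕ → EReal := fun n => if v n = 0 then (⊤ : EReal)
    else ((-(1 / (n : ℝ)) * Real.log (v n) : ℝ) : EReal) with hfv
  rw [Filter.le_liminf_iff]
  intro y hy
  rcases eq_or_ne y ⊥ with rfl | hybot
  · filter_upwards with n
    by_cases h : p n = 0
    · simp [h]
    · simp only [if_neg h]
      exact bot_lt_iff_ne_bot.2 (EReal.coe_ne_bot _)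
  obtain ⟨q, hyq, hq⟩ := EReal.exists_rat_btwn_of_lt hy
  obtain ⟨r, rfl⟩ : ∃ r : ℝ, y = (r : EReal) := by
    refine ⟨y.toReal, (EReal.coe_toReal ?_ hybot).symm⟩
    exact ne_top_of_lt hyq
  have hrq : r < (q : ℝ) := by exact_mod_cast hyq
  have hqu : ((q : ℝ) : EReal) < liminf fu atTop := lt_of_lt_of_le hq (min_le_left _ _)
  have hqv : ((q : ℝ) : EReal) < liminf fv atTop := lt_of_lt_of_le hq (min_le_right _ _)
  have hlog2 : ∀ᶠ n : ℕ in atTop, Real.log 2 / (n : ℝ) < (q : ℝ) - r :=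
    (tendsto_const_div_atTop_nhds_zero_nat (Real.log 2)).eventually_lt_const
      (by linarith)
  filter_upwards [Filter.eventually_lt_of_lt_liminf hqu,
    Filter.eventually_lt_of_lt_liminf hqv, hlog2, eventually_ge_atTop 1]
    with n hun hvn hl2 hn1
  by_cases hpz : p n = 0
  · simp only [hpz, if_pos]
    exact EReal.coe_lt_top r
  have hppos : 0 < p n := lt_of_le_of_ne (hp n) (Ne.symm hpz)
  have hn0 : (0 : ℝ) < (n : ℝ) := by positivity
  set m := max (u n) (v n) with hm
  have hpm : p n ≤ 2 * m := by
    have h1 : u n ≤ m := le_max_left _ _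
    have h2 : v n ≤ m := le_max_right _ _
    have := hle n
    linarith
  have hmpos : 0 < m := by linarith
  -- the max component has rate term > q
  have hmq : (q : ℝ) < -(1 / (n : ℝ)) * Real.log m := by
    rcases le_total (u n) (v n) with hc | hc
    · have hmv : m = v n := max_eq_right hc
      have hvne : v n ≠ 0 := by rw [← hmv]; exact ne_of_gt hmpos
      rw [hfv] at hvn
      simp only [if_neg hvne] at hvn
      rw [hmv]
      exact_mod_cast hvn
    · have hmu : m = u n := max_eq_left hc
      have hune : u n ≠ 0 := by rw [← hmu]; exact ne_of_gt hmpos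
      rw [hfu] at hun
      simp only [if_neg hune] at hun
      rw [hmu]
      exact_mod_cast hun
  simp only [if_neg hpz]
  rw [EReal.coe_lt_coe_iff]
  have hlogle : Real.log (p n) ≤ Real.log 2 + Real.log m := by
    rw [← Real.log_mul two_ne_zero (ne_of_gt hmpos)]
    exact Real.log_le_log hppos hpm
  have hinv : (0 : ℝ) < 1 / (n : ℝ) := by positivity
  have h3 : -(1 / (n : ℝ)) * Real.log (p n) ≥
      -(1 / (n : ℝ)) * (Real.log 2 + Real.log m) := by
    nlinarith
  have h4 : -(1 / (n : ℝ)) * (Real.log 2 + Real.log m)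
      = -(Real.log 2 / (n : ℝ)) + -(1 / (n : ℝ)) * Real.log m := by ring
  linarith

theorem zeta_eta_consequences (αf βf : ℝ → ℕ → ℝ)
    (hα : ∀ x n, αf x n ∈ Set.Icc (0 : ℝ) 1) (hβ : ∀ x n, 0 ≤ βf x n)
    (hNP : ∀ x y : ℝ, ∀ n : ℕ,
      αf x n + Real.exp (n * x) * βf x n ≤ αf y n + Real.exp (n * x) * βf y n)
    (a b : ℝ) (hab : a < b) :
    (liminfExpRate (βf a) < liminfExpRate (βf b) →
      (a : EReal) + liminfExpRate (αf b) ≤ liminfExpRate (βf a)) ∧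
    (liminfExpRate (αf b) < liminfExpRate (αf a) →
      ((-b : ℝ) : EReal) + liminfExpRate (βf a) ≤ liminfExpRate (αf b)) := by
  constructor
  · intro h
    have hle : ∀ n, βf a n ≤ Real.exp (-((n : ℝ) * a)) * αf b n + βf b n := by
      intro n
      have hNPn := hNP a b n
      have hα0 := (hα a n).1
      have hE : Real.exp ((n : ℝ) * a) * Real.exp (-((n : ℝ) * a)) = 1 := by
        rw [← Real.exp_add]; simp
      calc βf a n = (Real.exp ((n:ℝ)*a) * Real.exp (-((n:ℝ)*a))) * βf a n := by
              rw [hE, one_mul]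
        _ = Real.exp (-((n:ℝ)*a)) * (Real.exp ((n:ℝ)*a) * βf a n) := by ring
        _ ≤ Real.exp (-((n:ℝ)*a)) * (αf b n + Real.exp ((n:ℝ)*a) * βf b n) := by
              apply mul_le_mul_of_nonneg_left _ (Real.exp_pos _).le
              linarith
        _ = Real.exp (-((n:ℝ)*a)) * αf b n
            + (Real.exp ((n:ℝ)*a) * Real.exp (-((n:ℝ)*a))) * βf b n := by ring
        _ = Real.exp (-((n:ℝ)*a)) * αf b n + βf b n := by rw [hE, one_mul]
    have key := rate_min_le (βf a)
      (fun n => Real.exp (-((n : ℝ) * a)) * αf b n) (βf b) (hβ a) hle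
    have hsc := rate_scale (αf b) a
    rcases le_total (liminfExpRate (fun n => Real.exp (-((n : ℝ) * a)) * αf b n))
        (liminfExpRate (βf b)) with hc | hc
    · rw [min_eq_left hc] at key
      exact le_trans hsc key
    · rw [min_eq_right hc] at key
      exact absurd (lt_of_lt_of_le h key) (lt_irrefl _)
  · intro h
    have hle : ∀ n, αf b n ≤ αf a n + Real.exp (-((n : ℝ) * (-b))) * βf a n := by
      intro n
      have hNPn := hNP b a n
      have hβ0 := hβ b n
      have hE : Real.exp (-((n : ℝ) * (-b))) = Real.exp ((n : ℝ) * b) := by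
        congr 1; ring
      rw [hE]
      linarith [mul_nonneg (Real.exp_pos ((n:ℝ)*b)).le (hβ b n)]
    have key := rate_min_le (αf b) (αf a)
      (fun n => Real.exp (-((n : ℝ) * (-b))) * βf a n) (fun n => (hα b n).1) hle
    have hsc := rate_scale (βf a) (-b)
    rcases le_total (liminfExpRate (αf a))
        (liminfExpRate (fun n => Real.exp (-((n : ℝ) * (-b))) * βf a n)) with hc | hc
    · rw [min_eq_left hc] at key
      exact absurd (lt_of_lt_of_le h key) (lt_irrefl _)
    · rw [min_eq_right hc] at key
      exact le_trans hsc key
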